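/- Let L be a finitely generated free ℤ-module and let Ω be a finite subset of L. The following are equivalent: (a) there exists a subset ω of Ω whose elements are ℤ-linearly independent and such that Ω ⊆ {0} ∪ ω ∪ (−ω); (b) every subset ϖ of Ω with ϖ ∩ (−ϖ) = ∅ has ℤ-linearly independent elements. -/

import Mathlib

/-- A finite subset `Ω` of a finitely generated free `ℤ`-module is "presque libre" (PL)
iff there is a `ℤ`-linearly independent subset `ω ⊆ Ω` with `Ω ⊆ {0} ∪ ω ∪ (-ω)`,
iff every subset `ϖ ⊆ Ω` with `ϖ ∩ (-ϖ) = ∅` is `ℤ`-linearly independent. -/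
theorem stmt_0 (L : Type*) [AddCommGroup L] [Module ℤ L] [Module.Free ℤ L]
    [Module.Finite ℤ L] (Ω : Set L) (hΩ : Ω.Finite) :
    (∃ ω ⊆ Ω, LinearIndependent ℤ ((↑) : ω → L) ∧ Ω ⊆ {0} ∪ ω ∪ (-ω)) ↔
      (∀ ϖ ⊆ Ω, ϖ ∩ (-ϖ) = ∅ → LinearIndependent ℤ ((↑) : ϖ → L)) := by
  classical
  have hne : ∀ x : L, x ≠ 0 → x ≠ -x := by
    intro x hx h
    apply hx
    have b := Module.Free.chooseBasis ℤ L
    apply b.repr.injective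
    rw [map_zero]
    ext i
    have h' : b.repr x = -(b.repr x) := by rw [← map_neg, ← h]
    have hi := DFunLike.congr_fun h' i
    simp only [Finsupp.neg_apply, Finsupp.coe_zero, Pi.zero_apply] at hi ⊢
    omega
  constructor
  · rintro ⟨ω, hωΩ, hind, hcov⟩ ϖ hϖΩ hdisj
    have h0 : (0 : L) ∉ ϖ := by
      intro h
      have : (0 : L) ∈ ϖ ∩ (-ϖ) := ⟨h, by simpa using h⟩
      rw [hdisj] at this
      exact this
    have hmem : ∀ x ∈ ϖ, x ∈ ω ∨ -x ∈ ω := by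
      intro x hx
      rcases hcov (hϖΩ hx) with (h | h) | h
      · exact absurd h.symm (fun e => h0 (e ▸ hx))
      · exact Or.inl h
      · exact Or.inr (Set.mem_neg.mp h)
    let g : ϖ → ω := fun x =>
      if h : (x : L) ∈ ω then ⟨x, h⟩
      else ⟨-x, (hmem x x.2).resolve_left h⟩
    have hginj : Function.Injective g := by
      intro x y hxy
      by_cases hx : (x : L) ∈ ω <;> by_cases hy : (y : L) ∈ ω <;>
        simp only [g, hx, hy, dif_pos, dif_neg, not_false_iff, Subtype.mk.injEq] at hxy
      · exact Subtype.ext hxy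
      · exfalso
        have hyϖ : (y : L) ∈ ϖ := y.2
        have : (y : L) ∈ ϖ ∩ (-ϖ) := ⟨hyϖ, by rw [Set.mem_neg, ← hxy]; exact x.2⟩
        rw [hdisj] at this; exact this
      · exfalso
        have : (x : L) ∈ ϖ ∩ (-ϖ) := ⟨x.2, by rw [Set.mem_neg, hxy]; exact y.2⟩
        rw [hdisj] at this; exact this
      · exact Subtype.ext (neg_injective hxy)
    have h1 : LinearIndependent ℤ (((↑) : ω → L) ∘ g) := hind.comp g hginj
    have h2 := h1.units_smul (fun x => if (x : L) ∈ ω then 1 else -1)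
    convert h2 using 1
    funext x
    by_cases h : (x : L) ∈ ω <;>
      simp [g, h, Units.smul_def]
    all_goals exact (@MulAction.one_smul ℤ L _ (‹Module ℤ L›).toMulAction _).symm
  · intro H
    letI : LinearOrder L := IsWellOrder.linearOrder WellOrderingRel
    refine ⟨{α ∈ Ω | α ≠ 0 ∧ (-α ∈ Ω → α < -α)}, fun x hx => hx.1, ?_, ?_⟩
    · apply H
      · intro x hx; exact hx.1
      · ext x
        simp only [Set.mem_inter_iff, Set.mem_neg, Set.mem_empty_iff_false, iff_false,
          Set.mem_sep_iff]
        rintro ⟨⟨hxΩ, hx0, hlt⟩, hnxΩ, hnx0, hnlt⟩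
        have h1 := hlt hnxΩ
        have h2 := hnlt (by simpa using hxΩ)
        simp only [neg_neg] at h2
        exact absurd h1 (not_lt_of_gt h2)
    · intro α hα
      by_cases h0 : α = 0
      · exact Or.inl (Or.inl h0)
      by_cases hnΩ : -α ∈ Ω
      · rcases lt_trichotomy α (-α) with hlt | heq | hgt
        · exact Or.inl (Or.inr ⟨hα, h0, fun _ => hlt⟩)
        · exact absurd heq (hne α h0)
        · refine Or.inr (Set.mem_neg.mpr ⟨hnΩ, neg_ne_zero.mpr h0, fun _ => ?_⟩)
          simpa using hgt
      · exact Or.inl (Or.inr ⟨hα, h0, fun h => absurd h hnΩ⟩)
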